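/- Let n ≥ 1 and let v₁, v₂ be binary vectors of length n with m(v₂) ≥ m(v₁). If x₁ and x₂ are positive integers whose parity vectors of length n equal v₁ and v₂ respectively, then 2^n divides the integer 3^{m(v₂)−m(v₁)}·x₂·P(v₁) − x₁·P(v₂). (Paper's Theorem 4.8.) -/

import Mathlib

/-- The Collatz map `T`. -/
def collatzT (N : ℕ) : ℕ := if N % 2 = 0 then N / 2 else (3 * N + 1) / 2

/-- The parity vector of length `n` of `N`: entry `k` is `true` iff `T^[k] N` is odd. -/
def parityVec (N n : ℕ) : List Bool :=
  (List.range n).map (fun k => decide ((collatzT^[k] N) % 2 = 1))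

/-- `m(v)`: the number of ones of a binary vector. -/
def mOnes (v : List Bool) : ℕ := v.count true

/-- `P(v)`: the characteristic number of a binary vector,
`P(v) = Σ_{k=1}^{m} 3^(m-k) * 2^(j_k - 1)` where `j_1 < … < j_m` are the positions of ones. -/
def Pchar : List Bool → ℕ
  | [] => 0
  | e :: rest => (if e then 3 ^ mOnes rest else 0) + 2 * Pchar rest

lemma parityVec_succ (x n : ℕ) :
    parityVec x (n + 1) =
      decide (x % 2 = 1) :: parityVec (collatzT x) n := by
  unfold parityVec
  rw [List.range_succ_eq_map]
  simp [Function.iterate_succ_apply, Function.comp]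
  exact ⟨rfl, fun _ _ => rfl⟩

lemma two_mul_collatzT (x : ℕ) :
    2 * collatzT x = (if x % 2 = 1 then 3 * x + 1 else x) := by
  unfold collatzT
  rcases Nat.even_or_odd x with h | h
  · have h2 : x % 2 = 0 := Nat.even_iff.mp h
    simp [h2, Nat.mul_div_cancel' h.two_dvd]
  · have h2 : x % 2 = 1 := Nat.odd_iff.mp h
    have : (2 : ℕ) ∣ 3 * x + 1 := by omega
    simp [h2, Nat.mul_div_cancel' this]

lemma key (n x : ℕ) :
    2 ^ n * (collatzT^[n] x) =
      3 ^ mOnes (parityVec x n) * x + Pchar (parityVec x n) := by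
  induction n generalizing x with
  | zero => simp [parityVec, mOnes, Pchar]
  | succ n ih =>
    rw [parityVec_succ, Function.iterate_succ_apply]
    have h := ih (collatzT x)
    rcases Nat.even_or_odd x with he | ho
    · have h2 : x % 2 = 1 ↔ False := by simp [Nat.even_iff.mp he]
      have hT : 2 * collatzT x = x := by rw [two_mul_collatzT]; simp [Nat.even_iff.mp he]
      simp only [h2, decide_false]
      show 2 ^ (n+1) * (collatzT^[n] (collatzT x)) =
        3 ^ mOnes (false :: parityVec (collatzT x) n) * x +
        Pchar (false :: parityVec (collatzT x) n)
      have : 2 ^ (n+1) * (collatzT^[n] (collatzT x)) =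
          2 * (2 ^ n * (collatzT^[n] (collatzT x))) := by ring
      rw [this, h]
      have e2 : 2 * (3 ^ mOnes (parityVec (collatzT x) n) * collatzT x +
          Pchar (parityVec (collatzT x) n)) =
          3 ^ mOnes (parityVec (collatzT x) n) * (2 * collatzT x) +
          2 * Pchar (parityVec (collatzT x) n) := by ring
      rw [e2, hT]
      simp [mOnes, Pchar]
    · have h2 : x % 2 = 1 := Nat.odd_iff.mp ho
      have hT : 2 * collatzT x = 3 * x + 1 := by rw [two_mul_collatzT]; simp [h2]
      simp only [h2, decide_true]
      show 2 ^ (n+1) * (collatzT^[n] (collatzT x)) =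
        3 ^ mOnes (true :: parityVec (collatzT x) n) * x +
        Pchar (true :: parityVec (collatzT x) n)
      have e : 2 ^ (n+1) * (collatzT^[n] (collatzT x)) =
          2 * (2 ^ n * (collatzT^[n] (collatzT x))) := by ring
      rw [e, h]
      have : 2 * (3 ^ mOnes (parityVec (collatzT x) n) * collatzT x +
          Pchar (parityVec (collatzT x) n)) =
          3 ^ mOnes (parityVec (collatzT x) n) * (2 * collatzT x) +
          2 * Pchar (parityVec (collatzT x) n) := by ring
      rw [this, hT]
      simp only [mOnes, Pchar, List.count_cons, if_pos rfl]
      simp [mOnes]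
      ring

/-- Paper's Theorem 4.8: if v₁, v₂ have the same length n with m(v₂) ≥ m(v₁),
and x₁, x₂ realize them as parity vectors, then
`2^n ∣ 3^(m v₂ - m v₁) * x₂ * P v₁ - x₁ * P v₂` in ℤ. -/
theorem stmt_11 (n : ℕ) (hn : 1 ≤ n) (v₁ v₂ : List Bool)
    (h₁ : v₁.length = n) (h₂ : v₂.length = n) (hm : mOnes v₁ ≤ mOnes v₂)
    (x₁ x₂ : ℕ) (hx₁ : 0 < x₁) (hx₂ : 0 < x₂)
    (hp₁ : parityVec x₁ n = v₁) (hp₂ : parityVec x₂ n = v₂) :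
    (2 : ℤ) ^ n ∣
      (3 : ℤ) ^ (mOnes v₂ - mOnes v₁) * x₂ * Pchar v₁ - (x₁ : ℤ) * Pchar v₂ := by
  have k1 := key n x₁
  have k2 := key n x₂
  rw [hp₁] at k1
  rw [hp₂] at k2
  set m₁ := mOnes v₁
  set m₂ := mOnes v₂
  set y₁ := collatzT^[n] x₁
  set y₂ := collatzT^[n] x₂
  have k1' : (Pchar v₁ : ℤ) = 2 ^ n * y₁ - 3 ^ m₁ * x₁ := by
    have := congrArg (fun t : ℕ => (t : ℤ)) k1
    push_cast at this ⊢
    linarith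
  have k2' : (Pchar v₂ : ℤ) = 2 ^ n * y₂ - 3 ^ m₂ * x₂ := by
    have := congrArg (fun t : ℕ => (t : ℤ)) k2
    push_cast at this ⊢
    linarith
  have hmm : m₂ - m₁ + m₁ = m₂ := Nat.sub_add_cancel hm
  refine ⟨3 ^ (m₂ - m₁) * x₂ * y₁ - x₁ * y₂, ?_⟩
  rw [k1', k2']
  have h3 : (3:ℤ) ^ (m₂ - m₁) * 3 ^ m₁ = 3 ^ m₂ := by
    rw [← pow_add, hmm]
  linear_combination (-(x₁:ℤ) * x₂) * h3
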